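/- For every n ∈ ℕ and every A : Fin n → Bool with 2 · |{i : A i = true}| ≥ n (at least half the elements are successors), there exists a permutation σ of Fin n such that every prefix of the rearranged array A ∘ σ is successor-heavy: for every t with 1 ≤ t ≤ n, 4 · |{i : i < t ∧ A (σ i) = true}| ≥ t. -/

import Mathlib

private lemma fin_filter_card_eq (n : ℕ) (P : ℕ → Prop) [DecidablePred P] :
    (Finset.univ.filter fun i : Fin n => P i.val).card
      = ((Finset.range n).filter P).card := by
  apply Finset.card_bij (fun a _ => a.1)
  · intro a ha; simp at ha ⊢; exact ha
  · intro a _ b _ h; exact Fin.val_injective h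
  · intro b hb; simp at hb; exact ⟨⟨b, hb.1⟩, by simp [hb.2], rfl⟩

private lemma even_range_card (m : ℕ) :
    ((Finset.range m).filter fun i => Even i).card = (m + 1) / 2 := by
  induction m with
  | zero => simp
  | succ k ih =>
    rw [Finset.range_add_one, Finset.filter_insert]
    rcases Nat.even_or_odd k with h | h
    · rw [if_pos h, Finset.card_insert_of_notMem (by simp)]
      obtain ⟨j, rfl⟩ := h; omega
    · rw [if_neg (Nat.not_even_iff_odd.mpr h)]
      obtain ⟨j, rfl⟩ := h; omega

private lemma odd_range_card (m : ℕ) :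
    ((Finset.range m).filter fun i => ¬ Even i).card = m / 2 := by
  have := Finset.card_filter_add_card_filter_not
    (s := Finset.range m) (p := fun i => Even i)
  rw [even_range_card, Finset.card_range] at this
  omega

theorem exists_perm_all_prefixes_successor_heavy (n : ℕ) (A : Fin n → Bool)
    (hA : 2 * (Finset.univ.filter fun i : Fin n => A i = true).card ≥ n) :
    ∃ σ : Equiv.Perm (Fin n),
      ∀ t : ℕ, 1 ≤ t → t ≤ n →
        4 * (Finset.univ.filter fun i : Fin n => (i : ℕ) < t ∧ A (σ i) = true).card ≥ t := by
  set s := (Finset.univ.filter fun i : Fin n => A i = true).card with hs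
  set p := n - s with hp
  have hsn : s ≤ n := le_trans (Finset.card_filter_le _ _) (by simp)
  have h2p : 2 * p ≤ n := by omega
  set P : Fin n → Prop := fun i => Even (i : ℕ) ∨ 2 * p ≤ (i : ℕ) with hP
  have hPcard : (Finset.univ.filter fun i : Fin n => P i).card = s := by
    have h1 : (Finset.univ.filter fun i : Fin n => P i).card
        = ((Finset.range n).filter fun m => Even m ∨ 2 * p ≤ m).card :=
      fin_filter_card_eq n (fun m => Even m ∨ 2 * p ≤ m)
    have h2 := Finset.card_filter_add_card_filter_not
      (s := Finset.range n) (p := fun m => Even m ∨ 2 * p ≤ m)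
    have h3 : ((Finset.range n).filter fun m => ¬ (Even m ∨ 2 * p ≤ m)).card = p := by
      have he : ((Finset.range n).filter fun m => ¬ (Even m ∨ 2 * p ≤ m))
          = (Finset.range (2 * p)).filter fun m => ¬ Even m := by
        ext x; simp [Nat.even_iff]; omega
      rw [he, odd_range_card]; omega
    rw [Finset.card_range] at h2
    omega
  have hcard1 : Fintype.card {i : Fin n // P i} = Fintype.card {i : Fin n // A i = true} := by
    rw [Fintype.card_subtype, Fintype.card_subtype, hPcard]
  have hcard2 : Fintype.card {i : Fin n // ¬ P i} = Fintype.card {i : Fin n // ¬ A i = true} := by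
    rw [Fintype.card_subtype_compl, Fintype.card_subtype_compl, hcard1]
  let e := Fintype.equivOfCardEq hcard1
  let f := Fintype.equivOfCardEq hcard2
  refine ⟨Equiv.subtypeCongr e f, ?_⟩
  have key : ∀ i : Fin n, (A (Equiv.subtypeCongr e f i) = true) ↔ P i := by
    intro i
    by_cases h : P i
    · simp only [Equiv.subtypeCongr, Equiv.trans_apply, Equiv.sumCompl_symm_apply_of_pos h,
        Equiv.sumCongr_apply, Sum.map_inl, Equiv.sumCompl_apply_inl]
      exact ⟨fun _ => h, fun _ => (e ⟨i, h⟩).2⟩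
    · simp only [Equiv.subtypeCongr, Equiv.trans_apply, Equiv.sumCompl_symm_apply_of_neg h,
        Equiv.sumCongr_apply, Sum.map_inr, Equiv.sumCompl_apply_inr]
      constructor
      · intro hc; exact absurd hc (f ⟨i, h⟩).2
      · intro hc; exact absurd hc h
  intro t ht1 htn
  have hsub : (Finset.univ.filter fun i : Fin n => (i : ℕ) < t ∧ Even (i : ℕ))
      ⊆ (Finset.univ.filter fun i : Fin n => (i : ℕ) < t ∧ A (Equiv.subtypeCongr e f i) = true) := by
    intro x hx
    simp only [Finset.mem_filter, Finset.mem_univ, true_and] at hx ⊢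
    exact ⟨hx.1, (key x).mpr (Or.inl hx.2)⟩
  have hc : (Finset.univ.filter fun i : Fin n => (i : ℕ) < t ∧ Even (i : ℕ)).card = (t + 1) / 2 := by
    rw [fin_filter_card_eq n (fun m => m < t ∧ Even m)]
    have : ((Finset.range n).filter fun m => m < t ∧ Even m)
        = (Finset.range t).filter fun m => Even m := by
      ext x; simp [Nat.even_iff]; omega
    rw [this, even_range_card]
  have := Finset.card_le_card hsub
  omega
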